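/- Let W(q, a) = Σ_{r=1, (r,q)=1}^{q} e(a·r^k/q). For every prime p and integer a with p ∤ a, one has |W(p, a)| ≤ 1 + ((k, p−1) − 1)·√p, where (k, p−1) is the gcd of k and p−1. -/

import Mathlib

open Finset

/-- The complete exponential sum `W(q,a) = Σ_{r=1, (r,q)=1}^q e(a·r^k/q)`,
with `e(z) = e^{2πiz}`. -/
noncomputable def expSumW (k q : ℕ) (a : ℤ) : ℂ :=
  ∑ r ∈ (Finset.Icc 1 q).filter (fun r => Nat.gcd r q = 1),
    Complex.exp (2 * Real.pi * Complex.I * ((a : ℂ) * (r : ℂ) ^ k / (q : ℂ)))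


-- Lemma A: kernel count in cyclic group
lemma aux_card_pow_eq_one {G : Type*} [CommGroup G] [Fintype G] [DecidableEq G]
    {g : G} (hg : ∀ x, x ∈ Subgroup.zpowers g) {d : ℕ} (hd : d ∣ Fintype.card G)
    (hd0 : d ≠ 0) :
    #{x : G | x ^ d = 1} = d := by
  have hn0 : Fintype.card G ≠ 0 := Fintype.card_ne_zero
  set n := Fintype.card G with hn
  have hgord : orderOf g = n := by
    rw [orderOf_eq_card_of_forall_mem_zpowers hg, Nat.card_eq_fintype_card]
  set h := g ^ (n / d) with hh
  have hnd0 : n / d ≠ 0 :=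
    Nat.div_ne_zero_iff.mpr ⟨hd0, Nat.le_of_dvd (Nat.pos_of_ne_zero hn0) hd⟩
  have hords : orderOf h = d := by
    rw [hh, orderOf_pow' _ hnd0, hgord, Nat.gcd_eq_right (Nat.div_dvd_of_dvd hd),
      Nat.div_div_self hd hn0]
  have hset : ∀ x : G, x ^ d = 1 ↔ x ∈ Subgroup.zpowers h := by
    intro x
    constructor
    · intro hx
      obtain ⟨m, rfl⟩ := hg x
      have hx' : g ^ (m * (d : ℤ)) = 1 := by
        rw [zpow_mul, zpow_natCast]; exact hx
      have h1 : ((n : ℤ)) ∣ m * d := by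
        rw [← hgord]
        exact orderOf_dvd_iff_zpow_eq_one.mpr hx'
      obtain ⟨t, ht⟩ := h1
      have hnd : (n : ℤ) = (d : ℤ) * (n / d : ℕ) := by
        rw [← Nat.cast_mul, Nat.mul_div_cancel' hd]
      have hm : m = (n / d : ℕ) * t := by
        have h2 : m * (d : ℤ) = ((n / d : ℕ) * t) * (d : ℤ) := by rw [ht, hnd]; ring
        exact mul_right_cancel₀ (by exact_mod_cast hd0) h2
      refine ⟨t, ?_⟩
      show (g ^ (n / d)) ^ t = g ^ m
      rw [← zpow_natCast g (n/d), ← zpow_mul, ← hm]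
    · rintro ⟨t, rfl⟩
      have hhd : h ^ d = 1 := by
        rw [hh, ← pow_mul, Nat.div_mul_cancel hd, hn, pow_card_eq_one]
      show (h ^ t) ^ d = 1
      rw [← zpow_natCast (h ^ t) d, ← zpow_mul, mul_comm, zpow_mul, zpow_natCast, hhd, one_zpow]
  calc #{x : G | x ^ d = 1} = Nat.card {x : G // x ^ d = 1} := by
        rw [Nat.card_eq_fintype_card, Fintype.card_subtype]
    _ = Nat.card (Subgroup.zpowers h) :=
        Nat.card_congr (Equiv.subtypeEquivRight fun x => hset x)
    _ = d := by rw [Nat.card_zpowers, hords]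

-- Lemma B: fiber count
lemma aux_card_fiber {G : Type*} [CommGroup G] [Fintype G] [DecidableEq G]
    (k : ℕ) (y : G) :
    #{x : G | x ^ k = y} = if (∃ x : G, x ^ k = y) then #{x : G | x ^ k = 1} else 0 := by
  split_ifs with hy
  · obtain ⟨x₀, hx₀⟩ := hy
    have := MonoidHom.card_fiber_eq_of_mem_range (f := (powMonoidHom k : G →* G))
      (x := y) (y := (1 : G)) ⟨x₀, hx₀⟩ ⟨1, one_pow k⟩
    exact this
  · rw [Finset.card_eq_zero]
    push_neg at hy
    ext x
    simp [hy x]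

-- Lemma C: kernel of pow k = kernel of pow gcd
lemma aux_pow_k_eq_one_iff {G : Type*} [CommGroup G] [Fintype G]
    (k : ℕ) (x : G) :
    x ^ k = 1 ↔ x ^ (Nat.gcd k (Fintype.card G)) = 1 := by
  constructor
  · intro hx
    have h1 : orderOf x ∣ k := orderOf_dvd_of_pow_eq_one hx
    have h2 : orderOf x ∣ Fintype.card G := orderOf_dvd_card
    exact orderOf_dvd_iff_pow_eq_one.mp (Nat.dvd_gcd h1 h2)
  · intro hx
    have : x ^ (Nat.gcd k (Fintype.card G) * (k / Nat.gcd k (Fintype.card G))) = 1 := by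
      rw [pow_mul, hx, one_pow]
    rwa [Nat.mul_div_cancel' (Nat.gcd_dvd_left k _)] at this

-- Lemma D: a gcd-power is a k-power
lemma aux_dpow_is_kpow {G : Type*} [CommGroup G] [Fintype G]
    (k : ℕ) (x : G) :
    ∃ z : G, z ^ k = x ^ (Nat.gcd k (Fintype.card G)) := by
  set n := Fintype.card G
  set A := Nat.gcdA k n
  set B := Nat.gcdB k n
  have hbz : (Nat.gcd k n : ℤ) = k * A + n * B := Nat.gcd_eq_gcd_ab k n
  refine ⟨x ^ A, ?_⟩
  have h1 : x ^ ((Nat.gcd k n : ℤ)) = x ^ ((k : ℤ) * A) * x ^ ((n : ℤ) * B) := by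
    rw [← zpow_add, ← hbz]
  have h2 : x ^ ((n : ℤ) * B) = 1 := by
    rw [zpow_mul, zpow_natCast, pow_card_eq_one, one_zpow]
  have h3 : x ^ ((k : ℤ) * A) = (x ^ A) ^ k := by
    rw [mul_comm, zpow_mul, zpow_natCast]
  rw [← zpow_natCast x (Nat.gcd k n), h1, h2, h3, mul_one]

-- absolute value of a Gauss sum over ZMod p
lemma aux_abs_gaussSum {p : ℕ} [Fact p.Prime] {χ : MulChar (ZMod p) ℂ} (hχ : χ ≠ 1)
    {ψ : AddChar (ZMod p) ℂ} (hψ : ψ.IsPrimitive) :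
    ‖gaussSum χ ψ‖ = Real.sqrt p := by
  have hcard := gaussSum_mul_gaussSum_eq_card hχ hψ
  have hchar : 0 < ringChar (ZMod p) := by
    rw [ZMod.ringChar_zmod_n]
    exact (Fact.out : p.Prime).pos
  have hconj : gaussSum χ⁻¹ ψ⁻¹ = (starRingEnd ℂ) (gaussSum χ ψ) := by
    rw [gaussSum, gaussSum, map_sum]
    refine Finset.sum_congr rfl fun x _ => ?_
    rw [map_mul]
    congr 1
    · exact (MulChar.star_apply' χ x).symm
    · exact (AddChar.starComp_apply hchar x).symm
  rw [hconj, Complex.mul_conj] at hcard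
  have hnsq : Complex.normSq (gaussSum χ ψ) = p := by
    have := hcard
    rw [ZMod.card] at this
    exact_mod_cast this
  rw [Complex.norm_def, hnsq]

lemma aux_expSumW_eq (k p : ℕ) [Fact p.Prime] (a : ℤ) :
    expSumW k p a = ∑ x : (ZMod p)ˣ, ZMod.stdAddChar ((a : ZMod p) * (x : ZMod p) ^ k) := by
  have hp : p.Prime := Fact.out
  rw [expSumW]
  refine Finset.sum_bij' (fun r hr => ZMod.unitOfCoprime r ?_)
    (fun (x : (ZMod p)ˣ) _ => (x : ZMod p).val) ?_ ?_ ?_ ?_ ?_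
  · exact (Finset.mem_filter.mp hr).2
  · intro r hr
    exact Finset.mem_univ _
  · intro x _
    rw [Finset.mem_filter]
    have hne : ((x : ZMod p)) ≠ 0 := Units.ne_zero x
    have hvp : (x : ZMod p).val < p := ZMod.val_lt _
    have hv0 : (x : ZMod p).val ≠ 0 := fun h => hne (by rwa [← ZMod.val_eq_zero])
    refine ⟨Finset.mem_Icc.mpr ⟨Nat.one_le_iff_ne_zero.mpr hv0, le_of_lt hvp⟩, ?_⟩
    exact ZMod.val_coe_unit_coprime x
  · intro r hr
    obtain ⟨hIcc, hcop⟩ := Finset.mem_filter.mp hr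
    have hrp : r < p := by
      rcases lt_or_eq_of_le (Finset.mem_Icc.mp hIcc).2 with h | h
      · exact h
      · exfalso
        rw [h, Nat.gcd_self] at hcop
        exact hp.one_lt.ne' hcop
    simp only [ZMod.coe_unitOfCoprime]
    rw [ZMod.val_natCast, Nat.mod_eq_of_lt hrp]
  · intro x _
    ext
    simp [ZMod.natCast_val, ZMod.cast_id]
  · intro r hr
    simp only [ZMod.coe_unitOfCoprime]
    have h1 : ((a : ZMod p) * (r : ZMod p) ^ k) = (((a * (r : ℤ) ^ k : ℤ)) : ZMod p) := by
      push_cast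
      ring
    rw [h1, ZMod.stdAddChar_coe]
    congr 1
    push_cast
    ring

lemma aux_sum_units_split {p : ℕ} [Fact p.Prime] (f : ZMod p → ℂ) :
    ∑ x : ZMod p, f x = f 0 + ∑ y : (ZMod p)ˣ, f ↑y := by
  classical
  have h1 : ∑ y : (ZMod p)ˣ, f ↑y = ∑ z : {a : ZMod p // a ≠ 0}, f z := by
    refine Fintype.sum_equiv (unitsEquivNeZero) _ _ fun y => ?_
    rfl
  have h2 : ∑ z : {a : ZMod p // a ≠ 0}, f ↑z = ∑ x ∈ Finset.univ.erase (0 : ZMod p), f x :=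
    (Finset.sum_subtype _ (fun x => by simp) f).symm
  rw [h1, h2, Finset.add_sum_erase _ f (Finset.mem_univ 0)]

lemma aux_main (k p : ℕ) [Fact p.Prime] (hk : k ≠ 0) (b : ZMod p) (hb : b ≠ 0) :
    ‖∑ x : (ZMod p)ˣ, ZMod.stdAddChar (b * (x : ZMod p) ^ k)‖ ≤
      1 + ((Nat.gcd k (p - 1) : ℝ) - 1) * Real.sqrt p := by
  classical
  have hp : p.Prime := Fact.out
  haveI : NeZero p := ⟨hp.ne_zero⟩
  have hcardu : Fintype.card (ZMod p)ˣ = p - 1 := ZMod.card_units p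
  set d := Nat.gcd k (Fintype.card (ZMod p)ˣ) with hd_def
  have hd_eq : d = Nat.gcd k (p - 1) := by rw [hd_def, hcardu]
  have hd_dvd : d ∣ Fintype.card (ZMod p)ˣ := Nat.gcd_dvd_right _ _
  have hd0 : d ≠ 0 := by
    intro h
    exact hk (Nat.eq_zero_of_gcd_eq_zero_left (hd_def ▸ h))
  have hd_pos : 0 < d := Nat.pos_of_ne_zero hd0
  obtain ⟨g, hg⟩ := IsCyclic.exists_generator (α := (ZMod p)ˣ)
  -- the character
  set ζ : ℂ := Complex.exp (2 * Real.pi * Complex.I / d) with hζ_def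
  have hζ : IsPrimitiveRoot ζ d := Complex.isPrimitiveRoot_exp d hd0
  have hζ_unit : IsUnit ζ := hζ.isUnit hd0
  have hmem : hζ_unit.unit ∈ rootsOfUnity (Fintype.card (ZMod p)ˣ) ℂ := by
    rw [mem_rootsOfUnity]
    ext
    push_cast
    rw [IsUnit.unit_spec]
    obtain ⟨c, hc⟩ := hd_dvd
    rw [hc, pow_mul, hζ.pow_eq_one, one_pow]
  set χ : MulChar (ZMod p) ℂ := MulChar.ofRootOfUnity hmem hg with hχ_def
  have hχg : χ ↑g = ζ := by
    have := MulChar.ofRootOfUnity_spec hmem hg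
    rw [hχ_def, this, IsUnit.unit_spec]
  have hroot : ∀ x : (ZMod p)ˣ, (χ ↑x) ^ d = 1 := by
    intro x
    obtain ⟨m, hm⟩ := (mem_powers_iff_mem_zpowers.mpr (hg x))
    have hm' : g ^ m = x := hm
    rw [← hm', Units.val_pow_eq_pow_val, map_pow, hχg, ← pow_mul, mul_comm, pow_mul,
      hζ.pow_eq_one, one_pow]
  -- the character-sum count
  have hS1 : ∀ y : (ZMod p)ˣ, ((#{x : (ZMod p)ˣ | x ^ k = y} : ℕ) : ℂ)
      = ∑ t ∈ Finset.range d, (χ ↑y) ^ t := by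
    intro y
    by_cases hy : ∃ x : (ZMod p)ˣ, x ^ k = y
    · rw [aux_card_fiber, if_pos hy]
      have hfe : (Finset.univ.filter (fun x : (ZMod p)ˣ => x ^ k = 1))
          = Finset.univ.filter (fun x : (ZMod p)ˣ => x ^ d = 1) := by
        ext x
        simp only [Finset.mem_filter, Finset.mem_univ, true_and]
        exact aux_pow_k_eq_one_iff k x
      rw [hfe, aux_card_pow_eq_one hg hd_dvd hd0]
      obtain ⟨x₀, rfl⟩ := hy
      have hone : χ ↑x₀ ^ k = 1 := by
        conv_lhs => rw [← Nat.mul_div_cancel' (Nat.gcd_dvd_left k (Fintype.card (ZMod p)ˣ)),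
          pow_mul]
        rw [hroot x₀, one_pow]
      simp [hone]
    · rw [aux_card_fiber, if_neg hy]
      have hne1 : χ ↑y ≠ 1 := by
        intro h1
        obtain ⟨m, hm⟩ := (mem_powers_iff_mem_zpowers.mpr (hg y))
        have hm' : g ^ m = y := hm
        have hζm : ζ ^ m = 1 := by
          rw [← hχg, ← map_pow, ← Units.val_pow_eq_pow_val, hm', h1]
        obtain ⟨s, rfl⟩ := (hζ.pow_eq_one_iff_dvd m).mp hζm
        obtain ⟨z, hz⟩ := aux_dpow_is_kpow k (g ^ s)
        refine hy ⟨z, ?_⟩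
        rw [hz, ← hd_def, ← hm', ← pow_mul, mul_comm]
      rw [geom_sum_eq hne1 d, hroot y, sub_self, zero_div, Nat.cast_zero]
  -- decompose the sum
  set ψb : AddChar (ZMod p) ℂ := (ZMod.stdAddChar (N := p)).mulShift b with hψb_def
  have hψb_ne : ψb ≠ 1 := ZMod.isPrimitive_stdAddChar p hb
  have hψb_prim : ψb.IsPrimitive := AddChar.IsPrimitive.of_ne_one hψb_ne
  have hW : (∑ x : (ZMod p)ˣ, ZMod.stdAddChar (b * (x : ZMod p) ^ k))
      = ∑ t ∈ Finset.range d, ∑ y : (ZMod p)ˣ, (χ ↑y) ^ t * ψb ↑y := by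
    calc ∑ x : (ZMod p)ˣ, ZMod.stdAddChar (b * (x : ZMod p) ^ k)
        = ∑ x : (ZMod p)ˣ, ψb ↑(x ^ k) := by
          refine Finset.sum_congr rfl fun x _ => ?_
          rw [hψb_def, AddChar.mulShift_apply, Units.val_pow_eq_pow_val]
      _ = ∑ y : (ZMod p)ˣ, ∑ x ∈ ({x : (ZMod p)ˣ | x ^ k = y} : Finset _), ψb ↑y :=
          (Finset.sum_fiberwise_of_maps_to' (g := fun x : (ZMod p)ˣ => x ^ k)
            (fun x _ => Finset.mem_univ _) (fun y : (ZMod p)ˣ => ψb ↑y)).symm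
      _ = ∑ y : (ZMod p)ˣ, ((#{x : (ZMod p)ˣ | x ^ k = y} : ℕ) : ℂ) * ψb ↑y := by
          refine Finset.sum_congr rfl fun y _ => ?_
          rw [Finset.sum_const, nsmul_eq_mul]
      _ = ∑ y : (ZMod p)ˣ, (∑ t ∈ Finset.range d, (χ ↑y) ^ t) * ψb ↑y := by
          refine Finset.sum_congr rfl fun y _ => ?_
          rw [hS1 y]
      _ = ∑ y : (ZMod p)ˣ, ∑ t ∈ Finset.range d, (χ ↑y) ^ t * ψb ↑y := by
          refine Finset.sum_congr rfl fun y _ => ?_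
          rw [Finset.sum_mul]
      _ = ∑ t ∈ Finset.range d, ∑ y : (ZMod p)ˣ, (χ ↑y) ^ t * ψb ↑y := Finset.sum_comm
  -- the t = 0 term
  have hS0 : ∑ y : (ZMod p)ˣ, (χ ↑y) ^ 0 * ψb ↑y = -1 := by
    have h0 := aux_sum_units_split (fun x => ψb x)
    rw [AddChar.sum_eq_zero_of_ne_one hψb_ne] at h0
    have hψ0 : ψb 0 = 1 := by rw [AddChar.map_zero_eq_one]
    simp only [pow_zero, one_mul]
    rw [hψ0] at h0
    linear_combination -h0
  -- the other terms are Gauss sums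
  have hGt : ∀ t ∈ Finset.Ico 1 d,
      ‖∑ y : (ZMod p)ˣ, (χ ↑y) ^ t * ψb ↑y‖ = Real.sqrt p := by
    intro t ht
    obtain ⟨ht1, htd⟩ := Finset.mem_Ico.mp ht
    have ht0 : t ≠ 0 := by omega
    have hsum : ∑ y : (ZMod p)ˣ, (χ ↑y) ^ t * ψb ↑y = gaussSum (χ ^ t) ψb := by
      rw [gaussSum, aux_sum_units_split (fun x => (χ ^ t) x * ψb x)]
      have hz : (χ ^ t) (0 : ZMod p) = 0 := by
        rw [MulChar.pow_apply' _ ht0, MulChar.map_zero, zero_pow ht0]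
      rw [hz, zero_mul, zero_add]
      refine Finset.sum_congr rfl fun y _ => ?_
      rw [MulChar.pow_apply_coe]
    have hχt_ne : χ ^ t ≠ 1 := by
      intro h1
      have : (χ ^ t) ↑g = 1 := by rw [h1, MulChar.one_apply_coe]
      rw [MulChar.pow_apply_coe, hχg] at this
      exact hζ.pow_ne_one_of_pos_of_lt ht0 htd this
    rw [hsum, aux_abs_gaussSum hχt_ne hψb_prim]
  -- final estimate
  rw [hW, Finset.range_eq_Ico, Finset.sum_eq_sum_Ico_succ_bot hd_pos]
  calc ‖(∑ y : (ZMod p)ˣ, (χ ↑y) ^ 0 * ψb ↑y)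
        + ∑ t ∈ Finset.Ico 1 d, ∑ y : (ZMod p)ˣ, (χ ↑y) ^ t * ψb ↑y‖
      ≤ ‖∑ y : (ZMod p)ˣ, (χ ↑y) ^ 0 * ψb ↑y‖
        + ‖∑ t ∈ Finset.Ico 1 d, ∑ y : (ZMod p)ˣ, (χ ↑y) ^ t * ψb ↑y‖ :=
        norm_add_le _ _
    _ ≤ 1 + ∑ t ∈ Finset.Ico 1 d,
          ‖∑ y : (ZMod p)ˣ, (χ ↑y) ^ t * ψb ↑y‖ := by
        rw [hS0]
        simp only [norm_neg, norm_one]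
        exact add_le_add le_rfl (norm_sum_le _ _)
    _ = 1 + ((d : ℝ) - 1) * Real.sqrt p := by
        rw [Finset.sum_congr rfl hGt, Finset.sum_const, Nat.card_Ico, nsmul_eq_mul]
        congr 1
        congr 1
        rw [Nat.cast_sub hd_pos, Nat.cast_one]
    _ = 1 + ((Nat.gcd k (p - 1) : ℝ) - 1) * Real.sqrt p := by rw [hd_eq]


/-- For every prime `p` and integer `a` with `p ∤ a`, one has
`|W(p, a)| ≤ 1 + ((k, p−1) − 1)·√p`. -/
theorem stmt8 (k : ℕ) (hk : 2 ≤ k) (p : ℕ) (hp : p.Prime) (a : ℤ)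
    (ha : ¬ (p : ℤ) ∣ a) :
    ‖expSumW k p a‖ ≤
      1 + ((Nat.gcd k (p - 1) : ℝ) - 1) * Real.sqrt p := by
  haveI : Fact p.Prime := ⟨hp⟩
  have hb : ((a : ZMod p)) ≠ 0 := by
    rw [Ne, ZMod.intCast_zmod_eq_zero_iff_dvd]
    exact ha
  rw [aux_expSumW_eq]
  exact aux_main k p (by omega) _ hb
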